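/- Let d ≥ 2 be an even integer and Θ a d-small symbol with bipartition λ¹.λ² and charge (σ₁,σ₂), with defining intervals whose right region lies in row 1 and whose middle region has cardinality 0. Let b¹ be an addable or removable box of λ¹ and b² an addable or removable box of λ², and suppose the charged contents of b¹ and b² (with respect to t = (σ₁, σ₂ + d/2)) are congruent modulo d. Then the charged contents of b¹ and b² are equal. -/
import Mathlib


open scoped Classical

/-- A β-set: a set of integers containing all sufficiently small integers
and no sufficiently large ones. -/
def IsBetaSet (X : Set ℤ) : Prop :=
  (∃ c : ℤ, ∀ z : ℤ, z < c → z ∈ X) ∧ (∃ C : ℤ, ∀ z : ℤ, C ≤ z → z ∉ X)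

/-- `topB X = max X`. -/
noncomputable def topB (X : Set ℤ) : ℤ := sSup X

/-- `botB X = max {z | every integer < z lies in X}`. -/
noncomputable def botB (X : Set ℤ) : ℤ := sSup {z : ℤ | ∀ w : ℤ, w < z → w ∈ X}

/-- The charge `s(X)` of a β-set `X`, computed with the cutoff `c = botB X`. -/
noncomputable def chargeB (X : Set ℤ) : ℤ :=
  ((X ∩ Set.Ici (botB X)).ncard : ℤ) + botB X - 1

/-- `elemSeq X j` is the `(j+1)`-st largest element of the β-set `X`. -/
noncomputable def elemSeq (X : Set ℤ) : ℕ → ℤ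
  | 0 => sSup X
  | n + 1 => sSup (X ∩ Set.Iio (elemSeq X n))

/-- The partition `λ(X)` of a β-set `X`, `0`-indexed: `partB X j = λ_{j+1}`,
recovered from `x_j = s(X) + λ_j - j + 1` where `x_j` is the `j`-th largest element. -/
noncomputable def partB (X : Set ℤ) (j : ℕ) : ℕ :=
  (elemSeq X j - chargeB X + j).toNat

/-- The size `|λ(X)|` of the partition of a β-set `X`. -/
noncomputable def sizeB (X : Set ℤ) : ℕ := ∑ᶠ j : ℕ, partB X j

/-- A partition, encoded as a weakly decreasing eventually zero function (0-indexed). -/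
def IsPartition (μ : ℕ → ℕ) : Prop :=
  (∀ j, μ (j + 1) ≤ μ j) ∧ ∃ N, ∀ j, N ≤ j → μ j = 0

/-- The β-set `{s + λ_j - j + 1 : j ≥ 1}` of the partition `μ` with charge `s`. -/
def betaOf (μ : ℕ → ℕ) (s : ℤ) : Set ℤ :=
  {x : ℤ | ∃ j : ℕ, x = s + (μ j : ℤ) - (j : ℤ)}

/-- The symbol `Θ = (X₁, X₂)` is `d`-small with defining intervals
`I₁ = [a₁,b₁]` and `I₂ = [a₂,b₂]`. -/
structure IsDSmallWith (d : ℤ) (X₁ X₂ : Set ℤ) (a₁ b₁ a₂ b₂ : ℤ) : Prop where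
  len₁ : b₁ - a₁ = d / 2 - 1
  len₂ : b₂ - a₂ = d / 2 - 1
  bot₁ : a₁ ≤ botB X₁
  bot₂ : a₂ ≤ botB X₂
  top₁ : topB X₁ ≤ b₁
  top₂ : topB X₂ ≤ b₂
  cong : d ∣ b₂ - (b₁ + d / 2)

/-- The symbol `Θ = (X₁, X₂)` is `d`-small: it admits some pair of defining intervals. -/
def IsDSmall (d : ℤ) (X₁ X₂ : Set ℤ) : Prop :=
  ∃ a₁ b₁ a₂ b₂ : ℤ, IsDSmallWith d X₁ X₂ a₁ b₁ a₂ b₂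

/-- The row (`1` or `2`) containing the right region. -/
def rightRow (b₁ b₂ : ℤ) : ℕ := if b₁ < b₂ then 2 else 1

/-- The row, as a β-set, containing the right region. -/
def rightSet (X₁ X₂ : Set ℤ) (b₁ b₂ : ℤ) : Set ℤ := if b₁ < b₂ then X₂ else X₁

/-- The row, as a β-set, containing the left region. -/
def leftSet (X₁ X₂ : Set ℤ) (b₁ b₂ : ℤ) : Set ℤ := if b₁ < b₂ then X₁ else X₂

/-- The cardinality `kd` of the middle region. -/
def middleLen (d b₁ b₂ : ℤ) : ℤ := |b₂ - b₁| - d / 2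

/-- The alphabet `{∧, ∨, ×, ∘}` of up-down diagrams: `up = ∧`, `dn = ∨`,
`cross = ×`, `circ = ∘`. -/
inductive UD : Type
  | up
  | dn
  | cross
  | circ
deriving DecidableEq

/-- The up-down diagram `w_ud(Θ)` of a `d`-small symbol with defining intervals:
`wud d X₁ X₂ b₁ b₂ i` is the letter `w_i` for `1 ≤ i ≤ d/2`.  Here the right
region is `[m+1, m+d/2]` with `m = max b₁ b₂ - d/2`, `β_i = m + i`, and
`β_i - kd - d/2 = β_i - |b₂ - b₁|`. -/
noncomputable def wud (d : ℤ) (X₁ X₂ : Set ℤ) (b₁ b₂ : ℤ) (i : ℤ) : UD :=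
  if (max b₁ b₂ - d / 2 + i) ∈ rightSet X₁ X₂ b₁ b₂ then
    if (max b₁ b₂ - d / 2 + i) - |b₂ - b₁| ∈ leftSet X₁ X₂ b₁ b₂ then UD.cross else UD.up
  else
    if (max b₁ b₂ - d / 2 + i) - |b₂ - b₁| ∈ leftSet X₁ X₂ b₁ b₂ then UD.dn else UD.circ

/-- Removing an `e`-cohook in row `1` (the rows get interchanged afterwards). -/
def RemoveCohookRow1 (e : ℤ) (Θ Θ' : Set ℤ × Set ℤ) : Prop :=
  ∃ x : ℤ, x ∈ Θ.1 ∧ x - e ∉ Θ.2 ∧ Θ' = (Θ.2 ∪ {x - e}, Θ.1 \ {x})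

/-- Removing an `e`-cohook in row `2` (the rows get interchanged afterwards). -/
def RemoveCohookRow2 (e : ℤ) (Θ Θ' : Set ℤ × Set ℤ) : Prop :=
  ∃ x : ℤ, x ∈ Θ.2 ∧ x - e ∉ Θ.1 ∧ Θ' = (Θ.2 \ {x}, Θ.1 ∪ {x - e})

/-- Removing an `e`-cohook. -/
def RemoveCohook (e : ℤ) (Θ Θ' : Set ℤ × Set ℤ) : Prop :=
  RemoveCohookRow1 e Θ Θ' ∨ RemoveCohookRow2 e Θ Θ'

/-- The symbol `Θ` has an `e`-cohook. -/
def HasCohook (e : ℤ) (Θ : Set ℤ × Set ℤ) : Prop :=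
  (∃ x : ℤ, x ∈ Θ.1 ∧ x - e ∉ Θ.2) ∨ (∃ x : ℤ, x ∈ Θ.2 ∧ x - e ∉ Θ.1)

/-- `C` is an `e`-cocore of `Θ`: a symbol with no `e`-cohooks obtained from `Θ`
by a finite sequence of `e`-cohook removals. -/
def IsCocoreOf (e : ℤ) (Θ C : Set ℤ × Set ℤ) : Prop :=
  Relation.ReflTransGen (RemoveCohook e) Θ C ∧ ¬ HasCohook e C

/-- The `n`-fold composition of a relation. -/
def RelPow {α : Type*} (R : α → α → Prop) : ℕ → α → α → Prop
  | 0 => Eq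
  | n + 1 => fun a c => ∃ b, R a b ∧ RelPow R n b c

/-- `(a, b)` (row `a`, column `b`, both `1`-indexed) is a box of the partition `μ`
(`μ` is `0`-indexed, so `μ (a-1)` is the `a`-th part `λ_a`). -/
def IsBox (μ : ℕ → ℕ) (a b : ℕ) : Prop := 1 ≤ a ∧ 1 ≤ b ∧ b ≤ μ (a - 1)

/-- `(a, b)` is an addable box of `μ`: adjoining it yields a partition. -/
def IsAddableBox (μ : ℕ → ℕ) (a b : ℕ) : Prop :=
  1 ≤ a ∧ b = μ (a - 1) + 1 ∧ (a = 1 ∨ b ≤ μ (a - 2))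

/-- `(a, b)` is a removable box of `μ`: deleting it yields a partition. -/
def IsRemovableBox (μ : ℕ → ℕ) (a b : ℕ) : Prop :=
  1 ≤ a ∧ b = μ (a - 1) ∧ 1 ≤ b ∧ μ a < b

/-- The charged content `t + b - a` of the box in row `a` and column `b`,
with respect to the charge `t`. -/
def chCont (t : ℤ) (a b : ℕ) : ℤ := t + (b : ℤ) - (a : ℤ)

/-- Selecting the component `j ∈ {1, 2}` of a bipartition. -/
def compPart (μ₁ μ₂ : ℕ → ℕ) (j : ℕ) : ℕ → ℕ := if j = 1 then μ₁ else μ₂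

/-- Selecting the component `j ∈ {1, 2}` of a pair of charges. -/
def compT (t₁ t₂ : ℤ) (j : ℕ) : ℤ := if j = 1 then t₁ else t₂

/-- The box `(a, b)` in component `j` is a good removable `i`-box of the
bipartition `(μ₁, μ₂)` with charges `(t₁, t₂)`, where `r` is the row containing
the right region: it is a removable box of charged content `≡ i (mod d)` and
there is no addable box `A` of either component with charged content `≡ i (mod d)`
such that either `A` has strictly larger charged content, or `A` has equal
charged content and lies in component `r`. -/
def IsGoodRemovableBox (d : ℤ) (μ₁ μ₂ : ℕ → ℕ) (t₁ t₂ : ℤ) (r : ℕ) (i : ℤ)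
    (j a b : ℕ) : Prop :=
  (j = 1 ∨ j = 2) ∧ IsRemovableBox (compPart μ₁ μ₂ j) a b ∧
    d ∣ chCont (compT t₁ t₂ j) a b - i ∧
    ∀ j' a' b' : ℕ, (j' = 1 ∨ j' = 2) → IsAddableBox (compPart μ₁ μ₂ j') a' b' →
      d ∣ chCont (compT t₁ t₂ j') a' b' - i →
      ¬ (chCont (compT t₁ t₂ j) a b < chCont (compT t₁ t₂ j') a' b' ∨
        (chCont (compT t₁ t₂ j') a' b' = chCont (compT t₁ t₂ j) a b ∧ j' = r))

/-- The position of a letter in the order `× < ∧ < ∨ < ∘`. -/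
def udIdx : UD → ℕ
  | UD.cross => 0
  | UD.up => 1
  | UD.dn => 2
  | UD.circ => 3

/-- The word `w₁ ⋯ w_{d/2}` reads `×^α ∧^w ∨^h ∘^β`: all `×`'s first, then all
`∧`'s, then all `∨`'s, then all `∘`'s. -/
def SortedUD (d : ℤ) (w : ℤ → UD) : Prop :=
  ∀ i j : ℤ, 1 ≤ i → i ≤ j → j ≤ d / 2 → udIdx (w i) ≤ udIdx (w j)

/-- The number of occurrences of the letter `u` in the word `w₁ ⋯ w_{d/2}`. -/
noncomputable def countUD (d : ℤ) (w : ℤ → UD) (u : UD) : ℕ :=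
  ((Finset.Icc (1 : ℤ) (d / 2)).filter fun i => w i = u).card

/-- `w'` is obtained from `w` by permuting the letters `∧` and `∨` among the
positions carrying `∧` or `∨`, leaving every `×` and `∘` in place. -/
def PermUpDn (d : ℤ) (w w' : ℤ → UD) : Prop :=
  (∀ i : ℤ, 1 ≤ i → i ≤ d / 2 →
    ((w' i = UD.cross ↔ w i = UD.cross) ∧ (w' i = UD.circ ↔ w i = UD.circ))) ∧
  countUD d w' UD.up = countUD d w UD.up

/-- Replace every letter `∧` by `∨`, leaving the other letters unchanged. -/
def replaceUp : UD → UD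
  | UD.up => UD.dn
  | u => u

section BetaLemmas

variable {X : Set ℤ}

lemma IsBetaSet.nonempty' (hX : IsBetaSet X) : X.Nonempty := by
  obtain ⟨⟨c, hc⟩, _⟩ := hX
  exact ⟨c - 1, hc _ (by omega)⟩

lemma IsBetaSet.bddAbove' (hX : IsBetaSet X) : BddAbove X := by
  obtain ⟨_, ⟨C, hC⟩⟩ := hX
  exact ⟨C, fun x hx => by by_contra h; exact hC x (by omega) hx⟩

lemma mem_of_lt_botB (hX : IsBetaSet X) {w : ℤ} (hw : w < botB X) : w ∈ X := by
  obtain ⟨⟨c, hc⟩, ⟨C, hC⟩⟩ := hX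
  have hmem : botB X ∈ {z : ℤ | ∀ w : ℤ, w < z → w ∈ X} := by
    unfold botB
    refine Int.csSup_mem ⟨c, fun w hw => hc w hw⟩ ⟨C, fun z hz => ?_⟩
    by_contra h
    exact hC C le_rfl (hz C (by omega))
  exact hmem w hw

lemma botB_le_of_notMem (hX : IsBetaSet X) {z : ℤ} (hz : z ∉ X) : botB X ≤ z := by
  by_contra h
  exact hz (mem_of_lt_botB hX (by omega))

lemma le_topB_of_mem (hX : IsBetaSet X) {x : ℤ} (hx : x ∈ X) : x ≤ topB X :=
  le_csSup hX.bddAbove' hx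

lemma topB_mem (hX : IsBetaSet X) : topB X ∈ X :=
  Int.csSup_mem hX.nonempty' hX.bddAbove'

lemma exists_mem_lt (hX : IsBetaSet X) (t : ℤ) : ∃ w ∈ X, w < t := by
  refine ⟨min (botB X) t - 1, mem_of_lt_botB hX (by omega), by omega⟩

lemma elemSeq_succ_mem (hX : IsBetaSet X) (n : ℕ) :
    elemSeq X (n + 1) ∈ X ∩ Set.Iio (elemSeq X n) := by
  obtain ⟨w, hw, hw'⟩ := exists_mem_lt hX (elemSeq X n)
  exact Int.csSup_mem ⟨w, hw, hw'⟩ (hX.bddAbove'.mono Set.inter_subset_left)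

lemma elemSeq_mem (hX : IsBetaSet X) (n : ℕ) : elemSeq X n ∈ X := by
  cases n with
  | zero => exact topB_mem hX
  | succ n => exact (elemSeq_succ_mem hX n).1

lemma elemSeq_succ_lt (hX : IsBetaSet X) (n : ℕ) : elemSeq X (n + 1) < elemSeq X n :=
  (elemSeq_succ_mem hX n).2

lemma elemSeq_strictAnti (hX : IsBetaSet X) : StrictAnti (elemSeq X) :=
  strictAnti_nat_of_succ_lt (elemSeq_succ_lt hX)

lemma le_elemSeq_zero (hX : IsBetaSet X) {x : ℤ} (hx : x ∈ X) : x ≤ elemSeq X 0 :=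
  le_csSup hX.bddAbove' hx

lemma le_elemSeq_succ (hX : IsBetaSet X) {x : ℤ} {n : ℕ} (hx : x ∈ X)
    (h : x < elemSeq X n) : x ≤ elemSeq X (n + 1) :=
  le_csSup (hX.bddAbove'.mono Set.inter_subset_left) ⟨hx, h⟩

lemma eq_elemSeq_of_le (hX : IsBetaSet X) :
    ∀ j : ℕ, ∀ x ∈ X, elemSeq X j ≤ x → ∃ k ≤ j, elemSeq X k = x := by
  intro j
  induction j with
  | zero => exact fun x hx h => ⟨0, le_rfl, le_antisymm h (le_elemSeq_zero hX hx)⟩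
  | succ j ih =>
    intro x hx h
    by_cases h' : elemSeq X j ≤ x
    · obtain ⟨k, hk, hk'⟩ := ih x hx h'
      exact ⟨k, by omega, hk'⟩
    · exact ⟨j + 1, le_rfl, le_antisymm h (le_elemSeq_succ hX hx (show x < elemSeq X j by omega))⟩

lemma inter_Ici_eq_image (hX : IsBetaSet X) (j : ℕ) :
    X ∩ Set.Ici (elemSeq X j) = elemSeq X '' Set.Iic j := by
  ext x
  constructor
  · rintro ⟨hx, hge⟩
    obtain ⟨k, hk, hk'⟩ := eq_elemSeq_of_le hX j x hx hge
    exact ⟨k, hk, hk'⟩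
  · rintro ⟨k, hk, rfl⟩
    exact ⟨elemSeq_mem hX k, (elemSeq_strictAnti hX).antitone hk⟩

lemma inter_Ici_finite (hX : IsBetaSet X) (c : ℤ) : (X ∩ Set.Ici c).Finite := by
  obtain ⟨_, ⟨C, hC⟩⟩ := hX
  refine (Set.finite_Icc c C).subset ?_
  rintro x ⟨hx, hge⟩
  refine ⟨hge, ?_⟩
  by_contra h
  exact hC x (by omega) hx

lemma ncard_inter_Ici_elemSeq (hX : IsBetaSet X) (j : ℕ) :
    (X ∩ Set.Ici (elemSeq X j)).ncard = j + 1 := by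
  rw [inter_Ici_eq_image hX j,
    Set.ncard_image_of_injOn ((elemSeq_strictAnti hX).injective.injOn),
    ← Finset.coe_Iic, Set.ncard_coe_finset, Nat.card_Iic]

lemma set_Ico_ncard (a b : ℤ) : (Set.Ico a b).ncard = (b - a).toNat := by
  rw [← Finset.coe_Ico, Set.ncard_coe_finset, Int.card_Ico]

lemma chargeB_le (hX : IsBetaSet X) (j : ℕ) : chargeB X ≤ elemSeq X j + j := by
  have hN : (X ∩ Set.Ici (elemSeq X j)).ncard = j + 1 := ncard_inter_Ici_elemSeq hX j
  rw [chargeB]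
  set e := elemSeq X j with he
  set β := botB X with hβ
  by_cases h : β ≤ e
  · have hsub : X ∩ Set.Ici β ⊆ (X ∩ Set.Ici e) ∪ Set.Ico β e := by
      rintro x ⟨hx, hge⟩
      by_cases h' : e ≤ x
      · exact Or.inl ⟨hx, h'⟩
      · exact Or.inr ⟨hge, by omega⟩
    have h1 := Set.ncard_le_ncard hsub
      ((inter_Ici_finite hX e).union (Set.finite_Ico β e))
    have h2 := Set.ncard_union_le (X ∩ Set.Ici e) (Set.Ico β e)
    rw [hN, set_Ico_ncard] at h2
    omega
  · have hsub : (X ∩ Set.Ici β) ∪ Set.Ico e β ⊆ X ∩ Set.Ici e := by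
      rintro x (⟨hx, hge⟩ | ⟨hge, hlt⟩)
      · exact ⟨hx, by simp only [Set.mem_Ici] at hge ⊢; omega⟩
      · exact ⟨mem_of_lt_botB hX (by omega), hge⟩
    have hdisj : Disjoint (X ∩ Set.Ici β) (Set.Ico e β) := by
      rw [Set.disjoint_left]
      rintro x ⟨_, hge⟩ ⟨_, hlt⟩
      simp only [Set.mem_Ici] at hge
      omega
    have h1 := Set.ncard_le_ncard hsub (inter_Ici_finite hX e)
    rw [Set.ncard_union_eq hdisj (inter_Ici_finite hX β) (Set.finite_Ico e β),
      set_Ico_ncard, hN] at h1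
    omega

lemma partB_cast (hX : IsBetaSet X) (j : ℕ) :
    (partB X j : ℤ) = elemSeq X j - chargeB X + j := by
  have := chargeB_le hX j
  rw [partB]
  omega

lemma content_bounds (hX : IsBetaSet X) {A B : ℕ}
    (h : IsAddableBox (partB X) A B ∨ IsRemovableBox (partB X) A B) :
    botB X - 1 ≤ chargeB X + (B : ℤ) - A ∧ chargeB X + (B : ℤ) - A ≤ topB X := by
  rcases h with ⟨hA, hB, hor⟩ | ⟨hA, hB, hB1, hlt⟩
  · -- addable
    obtain ⟨j, rfl⟩ : ∃ j, A = j + 1 := ⟨A - 1, by omega⟩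
    simp only [Nat.add_sub_cancel] at hB hor
    have hBc : (B : ℤ) = elemSeq X j - chargeB X + j + 1 := by
      rw [hB]; push_cast [partB_cast hX j]; ring
    have hcont : chargeB X + (B : ℤ) - (↑(j + 1) : ℤ) = elemSeq X j := by
      rw [hBc]; push_cast; ring
    rw [hcont]
    refine ⟨?_, le_topB_of_mem hX (elemSeq_mem hX j)⟩
    rcases hor with h1 | h2
    · have hj0 : j = 0 := by omega
      rw [hj0]
      have := le_elemSeq_zero hX (mem_of_lt_botB hX (show botB X - 1 < botB X by omega))
      omega
    · have hidx : j + 1 - 2 = j - 1 := by omega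
      rw [hidx] at h2
      by_cases hj0 : j = 0
      · subst hj0
        simp only [Nat.zero_sub] at h2
        omega
      · have hjj : j = (j - 1) + 1 := by omega
        have hcast : (B : ℤ) ≤ (partB X (j - 1) : ℤ) := by exact_mod_cast h2
        rw [hBc, partB_cast hX (j - 1)] at hcast
        have hlt2 : elemSeq X j + 2 ≤ elemSeq X (j - 1) := by
          have hjc : (j : ℤ) = ((j - 1 : ℕ) : ℤ) + 1 := by omega
          omega
        have hnot : elemSeq X j + 1 ∉ X := by
          intro hcmem
          have h3 := le_elemSeq_succ hX hcmem
            (show elemSeq X j + 1 < elemSeq X (j - 1) by omega)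
          rw [← hjj] at h3
          omega
        have := botB_le_of_notMem hX hnot
        omega
  · -- removable
    obtain ⟨j, rfl⟩ : ∃ j, A = j + 1 := ⟨A - 1, by omega⟩
    simp only [Nat.add_sub_cancel] at hB
    have hBc : (B : ℤ) = elemSeq X j - chargeB X + j := by
      rw [hB, partB_cast hX j]
    have hcont : chargeB X + (B : ℤ) - (↑(j + 1) : ℤ) = elemSeq X j - 1 := by
      rw [hBc]; push_cast; ring
    rw [hcont]
    have hcast : (partB X (j + 1) : ℤ) < (B : ℤ) := by exact_mod_cast hlt
    rw [hBc, partB_cast hX (j + 1)] at hcast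
    have hgap : elemSeq X (j + 1) ≤ elemSeq X j - 2 := by push_cast at hcast; omega
    have hnot : elemSeq X j - 1 ∉ X := by
      intro hcmem
      have := le_elemSeq_succ hX hcmem (show elemSeq X j - 1 < elemSeq X j by omega)
      omega
    have h1 := botB_le_of_notMem hX hnot
    have h2 := le_topB_of_mem hX (elemSeq_mem hX j)
    omega

end BetaLemmas

/-- For a `d`-small symbol whose right region lies in row `1`
(`b₂ < b₁`) and whose middle region has cardinality `0`, given addable-or-removable
boxes `(A₁,B₁)` of `λ¹` and `(A₂,B₂)` of `λ²` whose charged contents (w.r.t.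
`t = (σ₁, σ₂ + d/2)`) are congruent modulo `d`, the two charged contents are equal. -/
theorem stmt7 (d : ℤ) (hd : 2 ≤ d) (hdE : Even d)
    (X₁ X₂ : Set ℤ) (hX₁ : IsBetaSet X₁) (hX₂ : IsBetaSet X₂)
    (a₁ b₁ a₂ b₂ : ℤ) (hsm : IsDSmallWith d X₁ X₂ a₁ b₁ a₂ b₂)
    (hrow : b₂ < b₁) (hmid : middleLen d b₁ b₂ = 0)
    (A₁ B₁ A₂ B₂ : ℕ)
    (hbx₁ : IsAddableBox (partB X₁) A₁ B₁ ∨ IsRemovableBox (partB X₁) A₁ B₁)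
    (hbx₂ : IsAddableBox (partB X₂) A₂ B₂ ∨ IsRemovableBox (partB X₂) A₂ B₂)
    (hcong : d ∣ chCont (chargeB X₁) A₁ B₁ - chCont (chargeB X₂ + d / 2) A₂ B₂) :
    chCont (chargeB X₁) A₁ B₁ = chCont (chargeB X₂ + d / 2) A₂ B₂ := by
  obtain ⟨k, hk⟩ := hdE
  have hk2 : d / 2 = k := by omega
  have hb : b₁ = b₂ + k := by
    rw [middleLen] at hmid
    rw [abs_of_neg (show b₂ - b₁ < 0 by omega)] at hmid
    omega
  have h1 := content_bounds hX₁ hbx₁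
  have h2 := content_bounds hX₂ hbx₂
  have := hsm.len₁; have := hsm.len₂
  have := hsm.bot₁; have := hsm.bot₂
  have := hsm.top₁; have := hsm.top₂
  rw [chCont, chCont]
  have hdvd : d ∣ chargeB X₁ + (B₁ : ℤ) - A₁ - (chargeB X₂ + d / 2 + B₂ - A₂) := by
    have : chargeB X₁ + (B₁ : ℤ) - A₁ - (chargeB X₂ + d / 2 + B₂ - A₂)
        = chCont (chargeB X₁) A₁ B₁ - chCont (chargeB X₂ + d / 2) A₂ B₂ := by
      rw [chCont, chCont]
    rw [this]; exact hcong
  have h0 : chargeB X₁ + (B₁ : ℤ) - A₁ - (chargeB X₂ + d / 2 + B₂ - A₂) = 0 := by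
    apply Int.eq_zero_of_abs_lt_dvd hdvd
    rw [abs_lt]
    constructor <;> omega
  omega
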